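/- For every integer b ≥ 1 and n ≥ 1, the expectation of Z_n restricted to the event {Z_n ≤ b} satisfies E[Z_n · 1_{Z_n ≤ b}] ≤ b · n^b · q_1^{n-b}, where Z_n is the size of the n-th generation of a Galton–Watson tree with offspring distribution (q_k), q_0 = 0. -/

import Mathlib

open MeasureTheory ProbabilityTheory
open scoped ENNReal

/-- For a Galton–Watson process `Z` with `Z 0 = 1`, offspring
distribution `q` (with `q 0 = 0`), built from the i.i.d. array `ξ` of offspring
variables via `Z (n+1) = ∑_{i < Z n} ξ n i`, one has, for all `b, n ≥ 1`,
`E[Z_n · 1_{Z_n ≤ b}] ≤ b · n^b · q_1^{n-b}`. -/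
theorem stmt_0
    {Ω : Type*} [MeasurableSpace Ω] (μ : Measure Ω) [IsProbabilityMeasure μ]
    (ξ : ℕ → ℕ → Ω → ℕ) (hmeas : ∀ n i, Measurable (ξ n i))
    (hindep : iIndepFun (fun (p : ℕ × ℕ) ω => ξ p.1 p.2 ω) μ)
    (q : ℕ → ℝ≥0∞) (hq0 : q 0 = 0)
    (hdist : ∀ n i k, μ {ω | ξ n i ω = k} = q k)
    (Z : ℕ → Ω → ℕ) (hZ0 : ∀ ω, Z 0 ω = 1)
    (hZrec : ∀ n ω, Z (n + 1) ω = ∑ i ∈ Finset.range (Z n ω), ξ n i ω)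
    (b n : ℕ) (hb : 1 ≤ b) (hn : 1 ≤ n) :
    ∫⁻ ω in {ω | Z n ω ≤ b}, (Z n ω : ℝ≥0∞) ∂μ
      ≤ (b : ℝ≥0∞) * (n : ℝ≥0∞) ^ b * (q 1) ^ ((n : ℤ) - (b : ℤ)) := by
  have hq1 : q 1 ≤ 1 := by rw [← hdist 0 0 1]; exact prob_le_one
  -- measurability of Z
  have measZ : ∀ m, Measurable (Z m) := by
    intro m
    induction m with
    | zero =>
      have : Z 0 = fun _ => 1 := funext hZ0
      rw [this]; exact measurable_const
    | succ m ih =>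
      have hZm : Z (m + 1) = fun ω => ∑ i ∈ Finset.range (Z m ω), ξ m i ω := funext (hZrec m)
      rw [hZm]
      apply measurable_to_countable'
      intro k
      have hEq : (fun ω => ∑ i ∈ Finset.range (Z m ω), ξ m i ω) ⁻¹' {k}
          = ⋃ j : ℕ, ({ω | Z m ω = j} ∩ {ω | ∑ i ∈ Finset.range j, ξ m i ω = k}) := by
        ext ω
        simp only [Set.mem_preimage, Set.mem_singleton_iff, Set.mem_iUnion, Set.mem_inter_iff,
          Set.mem_setOf_eq]
        constructor
        · intro h; exact ⟨Z m ω, rfl, h⟩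
        · rintro ⟨j, hj, h⟩; rw [hj]; exact h
      rw [hEq]
      refine MeasurableSet.iUnion fun j => MeasurableSet.inter ?_ ?_
      · exact ih (measurableSet_singleton j)
      · exact (Finset.measurable_sum _ fun i _ => hmeas m i) (measurableSet_singleton k)
  have hsmeas : MeasurableSet {ω | Z n ω ≤ b} := (measZ n) measurableSet_Iic
  -- step 1: LHS ≤ b * μ s
  have step1 : ∫⁻ ω in {ω | Z n ω ≤ b}, (Z n ω : ℝ≥0∞) ∂μ
      ≤ (b : ℝ≥0∞) * μ {ω | Z n ω ≤ b} := by
    calc ∫⁻ ω in {ω | Z n ω ≤ b}, (Z n ω : ℝ≥0∞) ∂μ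
        ≤ ∫⁻ _ in {ω | Z n ω ≤ b}, (b : ℝ≥0∞) ∂μ :=
          setLIntegral_mono' hsmeas fun ω hω => by exact_mod_cast hω
      _ = (b : ℝ≥0∞) * μ {ω | Z n ω ≤ b} := setLIntegral_const _ _
  by_cases hbn : b ≤ n
  · -- main case
    -- key combinatorial fact
    have key : ∀ ω, (∀ m i, 1 ≤ ξ m i ω) → Z n ω ≤ b →
        ∃ S ∈ (Finset.range n).powersetCard (n - b), ∀ m ∈ S, ξ m 0 ω = 1 := by
      intro ω hξ hZb
      have mono : ∀ m, Z m ω ≤ Z (m + 1) ω := by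
        intro m
        rw [hZrec m ω]
        calc Z m ω = ∑ _i ∈ Finset.range (Z m ω), 1 := by simp
          _ ≤ ∑ i ∈ Finset.range (Z m ω), ξ m i ω := Finset.sum_le_sum fun i _ => hξ m i
      have pos : ∀ m, 1 ≤ Z m ω := by
        intro m
        induction m with
        | zero => rw [hZ0]
        | succ m ih => exact ih.trans (mono m)
      have strict : ∀ m, Z (m + 1) ω ≠ Z m ω → Z m ω + 1 ≤ Z (m + 1) ω :=
        fun m h => Nat.lt_of_le_of_ne (mono m) (Ne.symm h)
      have count : ∀ m, ((Finset.range m).filter (fun j => Z (j + 1) ω ≠ Z j ω)).card + 1 ≤ Z m ω := by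
        intro m
        induction m with
        | zero => simp [hZ0]
        | succ m ih =>
          rw [Finset.range_add_one, Finset.filter_insert]
          by_cases h : Z (m + 1) ω ≠ Z m ω
          · rw [if_pos h, Finset.card_insert_of_notMem (by simp)]
            have h2 := strict m h
            omega
          · rw [if_neg h]
            rw [not_ne_iff] at h
            omega
      have hcards := Finset.card_filter_add_card_filter_not
        (s := Finset.range n) (p := fun j => Z (j + 1) ω ≠ Z j ω)
      rw [Finset.card_range] at hcards
      have hcount := count n
      have hTcard : n - b ≤ ((Finset.range n).filter (fun j => ¬ Z (j + 1) ω ≠ Z j ω)).card := by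
        omega
      obtain ⟨S, hST, hScard⟩ := Finset.exists_subset_card_eq hTcard
      refine ⟨S, Finset.mem_powersetCard.mpr ⟨hST.trans (Finset.filter_subset _ _), hScard⟩, ?_⟩
      intro m hm
      have hmT := hST hm
      rw [Finset.mem_filter, not_ne_iff] at hmT
      have heq : Z (m + 1) ω = Z m ω := hmT.2
      by_contra hne
      have h2 : 2 ≤ ξ m 0 ω := by have := hξ m 0; omega
      have h0 : 0 ∈ Finset.range (Z m ω) := Finset.mem_range.mpr (pos m)
      have hsum : Z m ω + 1 ≤ Z (m + 1) ω := by
        rw [hZrec m ω, ← Finset.add_sum_erase _ _ h0]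
        have h3 : ((Finset.range (Z m ω)).erase 0).card
            ≤ ∑ i ∈ (Finset.range (Z m ω)).erase 0, ξ m i ω := by
          calc ((Finset.range (Z m ω)).erase 0).card
              = ∑ _i ∈ (Finset.range (Z m ω)).erase 0, 1 := by simp
            _ ≤ _ := Finset.sum_le_sum fun i _ => hξ m i
        have h4 : ((Finset.range (Z m ω)).erase 0).card = Z m ω - 1 := by
          rw [Finset.card_erase_of_mem h0, Finset.card_range]
        have := pos m
        omega
      omega
    -- null set
    have hGc : μ {ω | ¬ ∀ m i, 1 ≤ ξ m i ω} = 0 := by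
      have : {ω | ¬ ∀ m i, 1 ≤ ξ m i ω} = ⋃ m, ⋃ i, {ω | ξ m i ω = 0} := by
        ext ω
        simp only [Set.mem_setOf_eq, Set.mem_iUnion, not_forall]
        constructor
        · rintro ⟨m, i, h⟩; exact ⟨m, i, by omega⟩
        · rintro ⟨m, i, h⟩; exact ⟨m, i, by omega⟩
      rw [this]
      exact measure_iUnion_null fun m => measure_iUnion_null fun i => by
        rw [hdist m i 0]; exact hq0
    -- union bound
    have hsub : {ω | Z n ω ≤ b} ⊆
        (⋃ S ∈ (Finset.range n).powersetCard (n - b), ⋂ m ∈ S, {ω | ξ m 0 ω = 1})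
          ∪ {ω | ¬ ∀ m i, 1 ≤ ξ m i ω} := by
      intro ω hZb
      by_cases hG : ∀ m i, 1 ≤ ξ m i ω
      · obtain ⟨S, hS, hall⟩ := key ω hG hZb
        exact Or.inl (Set.mem_biUnion hS (Set.mem_iInter₂.mpr fun m hm => hall m hm))
      · exact Or.inr hG
    -- measure of each intersection
    have hmeasE : ∀ S : Finset ℕ, μ (⋂ m ∈ S, {ω | ξ m 0 ω = 1}) = q 1 ^ S.card := by
      intro S
      have hinj : Function.Injective (fun m : ℕ => (m, 0) : ℕ → ℕ × ℕ) := by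
        intro a b h; exact (Prod.mk.injEq _ _ _ _).mp h |>.1
      have hrw : (⋂ m ∈ S, {ω | ξ m 0 ω = 1})
          = ⋂ p ∈ S.image (fun m => (m, 0)), (fun ω => ξ p.1 p.2 ω) ⁻¹' {1} := by
        rw [Finset.set_biInter_finset_image]
        rfl
      rw [hrw, hindep.measure_inter_preimage_eq_mul _ (fun p _ => measurableSet_singleton 1)]
      have : ∀ p ∈ S.image (fun m => (m, 0)), μ ((fun ω => ξ p.1 p.2 ω) ⁻¹' {1}) = q 1 := by
        intro p _
        rw [← hdist p.1 p.2 1]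
        rfl
      rw [Finset.prod_congr rfl this, Finset.prod_const, Finset.card_image_of_injective _ hinj]
    have hmu : μ {ω | Z n ω ≤ b} ≤ (n.choose b : ℝ≥0∞) * q 1 ^ (n - b) := by
      calc μ {ω | Z n ω ≤ b}
          ≤ μ ((⋃ S ∈ (Finset.range n).powersetCard (n - b), ⋂ m ∈ S, {ω | ξ m 0 ω = 1})
              ∪ {ω | ¬ ∀ m i, 1 ≤ ξ m i ω}) := measure_mono hsub
        _ ≤ μ (⋃ S ∈ (Finset.range n).powersetCard (n - b), ⋂ m ∈ S, {ω | ξ m 0 ω = 1})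
              + μ {ω | ¬ ∀ m i, 1 ≤ ξ m i ω} := measure_union_le _ _
        _ = μ (⋃ S ∈ (Finset.range n).powersetCard (n - b), ⋂ m ∈ S, {ω | ξ m 0 ω = 1}) := by
              rw [hGc, add_zero]
        _ ≤ ∑ S ∈ (Finset.range n).powersetCard (n - b), μ (⋂ m ∈ S, {ω | ξ m 0 ω = 1}) :=
              measure_biUnion_finset_le _ _
        _ = ∑ S ∈ (Finset.range n).powersetCard (n - b), q 1 ^ (n - b) := by
              refine Finset.sum_congr rfl fun S hS => ?_
              rw [hmeasE S, (Finset.mem_powersetCard.mp hS).2]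
        _ = ((Finset.range n).powersetCard (n - b)).card * q 1 ^ (n - b) := by
              rw [Finset.sum_const, nsmul_eq_mul]
        _ = (n.choose b : ℝ≥0∞) * q 1 ^ (n - b) := by
              rw [Finset.card_powersetCard, Finset.card_range, Nat.choose_symm hbn]
    -- assemble
    have hzpow : q 1 ^ ((n : ℤ) - (b : ℤ)) = q 1 ^ (n - b) := by
      have : (n : ℤ) - (b : ℤ) = ((n - b : ℕ) : ℤ) := by omega
      rw [this, zpow_natCast]
    rw [hzpow]
    calc ∫⁻ ω in {ω | Z n ω ≤ b}, (Z n ω : ℝ≥0∞) ∂μ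
        ≤ (b : ℝ≥0∞) * μ {ω | Z n ω ≤ b} := step1
      _ ≤ (b : ℝ≥0∞) * ((n.choose b : ℝ≥0∞) * q 1 ^ (n - b)) := by
          exact mul_le_mul_right hmu _
      _ ≤ (b : ℝ≥0∞) * ((n : ℝ≥0∞) ^ b * q 1 ^ (n - b)) := by
          refine mul_le_mul_right (mul_le_mul_left ?_ _) _
          calc (n.choose b : ℝ≥0∞) ≤ ((n ^ b : ℕ) : ℝ≥0∞) :=
                Nat.cast_le.mpr (Nat.choose_le_pow n b)
            _ = (n : ℝ≥0∞) ^ b := by push_cast; ring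
      _ = (b : ℝ≥0∞) * (n : ℝ≥0∞) ^ b * q 1 ^ (n - b) := by ring
  · -- case n < b
    push_neg at hbn
    have hRHS : (b : ℝ≥0∞) ≤ (b : ℝ≥0∞) * (n : ℝ≥0∞) ^ b * (q 1) ^ ((n : ℤ) - (b : ℤ)) := by
      have h1 : (1 : ℝ≥0∞) ≤ (n : ℝ≥0∞) ^ b := one_le_pow_of_one_le' (by exact_mod_cast hn) b
      have h2 : (1 : ℝ≥0∞) ≤ (q 1) ^ ((n : ℤ) - (b : ℤ)) := by
        by_cases h0 : q 1 = 0
        · have hz : (n : ℤ) - (b : ℤ) = Int.negSucc (b - n - 1) := by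
            rw [Int.negSucc_eq]; push_cast; omega
          rw [hz, zpow_negSucc, h0, zero_pow (Nat.succ_ne_zero _), ENNReal.inv_zero]
          exact le_top
        · have htop : q 1 ≠ ⊤ := (hq1.trans_lt ENNReal.one_lt_top).ne
          have hz : (n : ℤ) - (b : ℤ) = -((b - n : ℕ) : ℤ) := by omega
          rw [hz, ENNReal.zpow_neg, zpow_natCast]
          exact ENNReal.one_le_inv.mpr (pow_le_one' hq1 _)
      calc (b : ℝ≥0∞) = (b : ℝ≥0∞) * 1 * 1 := by ring
        _ ≤ (b : ℝ≥0∞) * (n : ℝ≥0∞) ^ b * (q 1) ^ ((n : ℤ) - (b : ℤ)) :=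
            mul_le_mul' (mul_le_mul' le_rfl h1) h2
    calc ∫⁻ ω in {ω | Z n ω ≤ b}, (Z n ω : ℝ≥0∞) ∂μ
        ≤ (b : ℝ≥0∞) * μ {ω | Z n ω ≤ b} := step1
      _ ≤ (b : ℝ≥0∞) * 1 := mul_le_mul_right prob_le_one _
      _ = (b : ℝ≥0∞) := mul_one _
      _ ≤ _ := hRHS
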